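/- Let P = ⟨D,Γ,Δ⟩ be a planning problem in the action language B whose action theory (D,Γ) is consistent, and let Π(P,n) be its standard ASP encoding with horizon n. Then s0 a0 s1 ... a_{n−1} s_n is a trajectory of D with s0 the initial state of (D,Γ) and Δ ⊆ s_n if and only if there exists an answer set M of Π(P,n) such that occ(a_i,i) ∈ M for every i ∈ {0,...,n−1} and s_i = {ℓ | ℓ a fluent literal, holds(ℓ,i) ∈ M} for every i ∈ {0,...,n}. -/

import Mathlib

/- # Action language B -/

/-- A fluent literal: a fluent or its negation. -/
inductive Lit (F : Type) where
  | pos : F → Lit F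
  | neg : F → Lit F

namespace Lit
/-- The complement of a fluent literal. -/
def compl {F : Type} : Lit F → Lit F
  | .pos f => .neg f
  | .neg f => .pos f
end Lit

/-- A set of fluent literals is consistent if it contains no fluent together with
its negation. -/
def ConsistentLits {F : Type} (s : Set (Lit F)) : Prop :=
  ∀ f : F, ¬ (Lit.pos f ∈ s ∧ Lit.neg f ∈ s)

/-- A set of fluent literals is complete if it contains each fluent or its negation. -/
def CompleteLits {F : Type} (s : Set (Lit F)) : Prop :=
  ∀ f : F, Lit.pos f ∈ s ∨ Lit.neg f ∈ s

/-- A static causal law `caused(prem, concl)`. -/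
structure StaticLaw (F : Type) where
  prem : Set (Lit F)
  concl : Lit F

/-- A dynamic causal law `causes(act, concl, prem)`. -/
structure DynamicLaw (F A : Type) where
  act : A
  concl : Lit F
  prem : Set (Lit F)

/-- An executability condition `executable(act, prem)`. -/
structure ExecLaw (F A : Type) where
  act : A
  prem : Set (Lit F)

/-- A domain in the action language B. -/
structure BDomain (F A : Type) where
  statics : Set (StaticLaw F)
  dynamics : Set (DynamicLaw F A)
  execs : Set (ExecLaw F A)

/-- `v` is closed under the set `K` of static causal laws. -/
def ClosedUnder {F : Type} (K : Set (StaticLaw F)) (v : Set (Lit F)) : Prop :=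
  ∀ r ∈ K, r.prem ⊆ v → r.concl ∈ v

/-- `IsCl K u v`: `v` is the least consistent set of literals containing `u`
and closed under `K`. -/
def IsCl {F : Type} (K : Set (StaticLaw F)) (u v : Set (Lit F)) : Prop :=
  u ⊆ v ∧ ConsistentLits v ∧ ClosedUnder K v ∧
    ∀ w, u ⊆ w → ConsistentLits w → ClosedUnder K w → v ⊆ w

/-- A state: a maximal (complete) consistent set of fluent literals closed under
the static causal laws. -/
def IsState {F A : Type} (D : BDomain F A) (s : Set (Lit F)) : Prop :=
  CompleteLits s ∧ ConsistentLits s ∧ ClosedUnder D.statics s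

/-- Action `a` is executable in `s`. -/
def Executable {F A : Type} (D : BDomain F A) (a : A) (s : Set (Lit F)) : Prop :=
  ∃ e ∈ D.execs, e.act = a ∧ e.prem ⊆ s

/-- The direct effects `e(a,s)` of action `a` in `s`. -/
def directEffects {F A : Type} (D : BDomain F A) (a : A) (s : Set (Lit F)) : Set (Lit F) :=
  { l | ∃ d ∈ D.dynamics, d.act = a ∧ d.concl = l ∧ d.prem ⊆ s }

/-- The transition function `Φ` of a domain. -/
def Phi {F A : Type} (D : BDomain F A) (a : A) (s : Set (Lit F)) : Set (Set (Lit F)) :=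
  { s' | Executable D a s ∧ IsState D s' ∧
      IsCl D.statics (directEffects D a s ∪ (s ∩ s')) s' }

/-- A planning problem `⟨D, Γ, Δ⟩`; `init` is the set of literals `f` with
`initially(f) ∈ Γ`, and `goal` is `Δ`. -/
structure PlanningProblem (F A : Type) where
  dom : BDomain F A
  init : Set (Lit F)
  goal : Set (Lit F)

/-- The action theory `(D,Γ)` is consistent: `Φ(a,s) ≠ ∅` whenever `a` is executable
in state `s`, and the initial state is a state. -/
def ConsistentTheory {F A : Type} (P : PlanningProblem F A) : Prop :=
  (∀ (a : A) (s : Set (Lit F)), IsState P.dom s → Executable P.dom a s →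
      (Phi P.dom a s).Nonempty) ∧
  IsState P.dom P.init

/-- `s0 a0 s1 ... a_{n-1} s_n` is a trajectory. -/
def IsTrajectory {F A : Type} (D : BDomain F A) (n : ℕ)
    (ss : ℕ → Set (Lit F)) (acts : ℕ → A) : Prop :=
  IsState D (ss 0) ∧ ∀ i < n, ss (i + 1) ∈ Phi D (acts i) (ss i)

/- # Answer set programming -/

/-- A normal rule (`head = none` gives a constraint). -/
structure NRule (At : Type) where
  head : Option At
  pos : Set At
  neg : Set At

/-- A cardinality-1 choice rule `1{choices}1 ← pos, not neg`. -/
structure CRule (At : Type) where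
  choices : Set At
  pos : Set At
  neg : Set At

/-- A program: normal rules (and constraints) plus choice rules. -/
structure Program (At : Type) where
  normals : Set (NRule At)
  choiceRules : Set (CRule At)

/-- `X` is closed under the Gelfond–Lifschitz reduct of `P` w.r.t. `M`. The reduct
contains `h ← pos` for every normal rule with head `h` whose negative body is
disjoint from `M`, and `a ← pos` for every choice rule with negative body disjoint
from `M` and every chosen atom `a ∈ M`. -/
def ReductClosed {At : Type} (P : Program At) (M X : Set At) : Prop :=
  (∀ r ∈ P.normals, r.neg ∩ M = ∅ → r.pos ⊆ X → ∀ h, r.head = some h → h ∈ X) ∧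
  (∀ c ∈ P.choiceRules, c.neg ∩ M = ∅ → c.pos ⊆ X → ∀ a ∈ c.choices, a ∈ M → a ∈ X)

/-- `M` satisfies all constraints of `P`. -/
def SatConstraints {At : Type} (P : Program At) (M : Set At) : Prop :=
  ∀ r ∈ P.normals, r.head = none → ¬ (r.pos ⊆ M ∧ r.neg ∩ M = ∅)

/-- `M` satisfies the choice rules of `P`: when the body holds, exactly one chosen
atom is in `M`. -/
def SatChoices {At : Type} (P : Program At) (M : Set At) : Prop :=
  ∀ c ∈ P.choiceRules, c.pos ⊆ M → c.neg ∩ M = ∅ → ∃! a, a ∈ c.choices ∧ a ∈ M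

/-- `M` is an answer set (stable model) of `P`: it satisfies constraints and choice
rules and is the least model of the reduct of `P` w.r.t. `M`. -/
def AnswerSet {At : Type} (P : Program At) (M : Set At) : Prop :=
  SatConstraints P M ∧ SatChoices P M ∧ ReductClosed P M M ∧
    ∀ X, ReductClosed P M X → M ⊆ X

/- # The encoding Π(P,n) -/

/-- Atoms of the program `Π(P,n)`. -/
inductive PAtom (F A : Type) where
  | holds : Lit F → ℕ → PAtom F A
  | occ : A → ℕ → PAtom F A
  | possible : A → ℕ → PAtom F A
  | goal : PAtom F A

/-- `holds(φ,t)`: the set of atoms `holds(l,t)` for `l ∈ φ`. -/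
def holdsSet {F A : Type} (φ : Set (Lit F)) (t : ℕ) : Set (PAtom F A) :=
  { x | ∃ l ∈ φ, x = PAtom.holds l t }

/-- The standard ASP encoding `Π(P,n)` of a planning problem with horizon `n`. -/
def PiProgram {F A : Type} (P : PlanningProblem F A) (n : ℕ) : Program (PAtom F A) where
  normals :=
    -- facts holds(f,0) for initially(f) ∈ Γ
    { r | ∃ l ∈ P.init, r = ⟨some (PAtom.holds l 0), ∅, ∅⟩ } ∪
    -- possible(a,T) ← holds(φ,T)
    { r | ∃ e ∈ P.dom.execs, ∃ t ≤ n,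
        r = ⟨some (PAtom.possible e.act t), holdsSet e.prem t, ∅⟩ } ∪
    -- holds(f,T+1) ← occ(a,T), holds(φ,T)
    { r | ∃ d ∈ P.dom.dynamics, ∃ t < n,
        r = ⟨some (PAtom.holds d.concl (t + 1)),
             insert (PAtom.occ d.act t) (holdsSet d.prem t), ∅⟩ } ∪
    -- holds(f,T) ← holds(φ,T)
    { r | ∃ sl ∈ P.dom.statics, ∃ t ≤ n,
        r = ⟨some (PAtom.holds sl.concl t), holdsSet sl.prem t, ∅⟩ } ∪
    -- ← occ(A,T), not possible(A,T)
    { r | ∃ (a : A), ∃ t < n,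
        r = ⟨none, {PAtom.occ a t}, {PAtom.possible a t}⟩ } ∪
    -- inertia
    { r | ∃ (l : Lit F), ∃ t < n,
        r = ⟨some (PAtom.holds l (t + 1)), {PAtom.holds l t},
             {PAtom.holds l.compl (t + 1)}⟩ } ∪
    -- ← holds(F,T), holds(¬F,T)
    { r | ∃ (f : F), ∃ t ≤ n,
        r = ⟨none, {PAtom.holds (Lit.pos f) t, PAtom.holds (Lit.neg f) t}, ∅⟩ } ∪
    -- goal ← holds(Δ,n)  and  ← not goal
    { ⟨some PAtom.goal, holdsSet P.goal n, ∅⟩,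
      ⟨none, ∅, {PAtom.goal}⟩ }
  choiceRules :=
    -- 1{occ(A,T) : action(A)}1 for T < n
    { c | ∃ t < n, c = ⟨{ x | ∃ a : A, x = PAtom.occ a t }, ∅, ∅⟩ }

section Aux
variable {F A : Type}

lemma compl_mem_of_not_mem {s : Set (Lit F)} (hc : CompleteLits s) {l : Lit F}
    (h : l.compl ∉ s) : l ∈ s := by
  cases l with
  | pos f =>
    rcases hc f with h1 | h1
    · exact h1
    · exact absurd h1 h
  | neg f =>
    rcases hc f with h1 | h1
    · exact absurd h1 h
    · exact h1

lemma compl_not_mem {s : Set (Lit F)} (hc : ConsistentLits s) {l : Lit F}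
    (h : l ∈ s) : l.compl ∉ s := by
  cases l with
  | pos f => exact fun h' => hc f ⟨h, h'⟩
  | neg f => exact fun h' => hc f ⟨h', h⟩

lemma holdsSet_subset_iff {φ : Set (Lit F)} {t : ℕ} {M : Set (PAtom F A)} :
    holdsSet φ t ⊆ M ↔ ∀ l ∈ φ, PAtom.holds l t ∈ M := by
  constructor
  · intro h l hl; exact h ⟨l, hl, rfl⟩
  · rintro h x ⟨l, hl, rfl⟩; exact h l hl

lemma mem_normals_iff {P : PlanningProblem F A} {n : ℕ} {r : NRule (PAtom F A)} :
    r ∈ (PiProgram P n).normals ↔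
      (∃ l ∈ P.init, r = ⟨some (PAtom.holds l 0), ∅, ∅⟩) ∨
      (∃ e ∈ P.dom.execs, ∃ t ≤ n,
        r = ⟨some (PAtom.possible e.act t), holdsSet e.prem t, ∅⟩) ∨
      (∃ d ∈ P.dom.dynamics, ∃ t < n,
        r = ⟨some (PAtom.holds d.concl (t + 1)),
             insert (PAtom.occ d.act t) (holdsSet d.prem t), ∅⟩) ∨
      (∃ sl ∈ P.dom.statics, ∃ t ≤ n,
        r = ⟨some (PAtom.holds sl.concl t), holdsSet sl.prem t, ∅⟩) ∨
      (∃ a : A, ∃ t < n, r = ⟨none, {PAtom.occ a t}, {PAtom.possible a t}⟩) ∨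
      (∃ l : Lit F, ∃ t < n,
        r = ⟨some (PAtom.holds l (t + 1)), {PAtom.holds l t},
             {PAtom.holds l.compl (t + 1)}⟩) ∨
      (∃ f : F, ∃ t ≤ n,
        r = ⟨none, {PAtom.holds (Lit.pos f) t, PAtom.holds (Lit.neg f) t}, ∅⟩) ∨
      r = ⟨some PAtom.goal, holdsSet P.goal n, ∅⟩ ∨
      r = ⟨none, ∅, {PAtom.goal}⟩ := by
  simp only [PiProgram, Set.mem_union, Set.mem_setOf_eq, Set.mem_insert_iff,
    Set.mem_singleton_iff, or_assoc]

lemma mem_choice_iff {P : PlanningProblem F A} {n : ℕ} {c : CRule (PAtom F A)} :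
    c ∈ (PiProgram P n).choiceRules ↔
      ∃ t < n, c = ⟨{ x | ∃ a : A, x = PAtom.occ a t }, ∅, ∅⟩ := Iff.rfl

end Aux
section Aux2
variable {F A : Type} {P : PlanningProblem F A} {n : ℕ}

lemma fact_rule_mem {l : Lit F} (hl : l ∈ P.init) :
    (⟨some (PAtom.holds l 0), ∅, ∅⟩ : NRule (PAtom F A)) ∈ (PiProgram P n).normals :=
  mem_normals_iff.mpr (Or.inl ⟨l, hl, rfl⟩)

lemma poss_rule_mem {e : ExecLaw F A} (he : e ∈ P.dom.execs) {t : ℕ} (ht : t ≤ n) :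
    (⟨some (PAtom.possible e.act t), holdsSet e.prem t, ∅⟩ : NRule (PAtom F A)) ∈
      (PiProgram P n).normals :=
  mem_normals_iff.mpr (Or.inr (Or.inl ⟨e, he, t, ht, rfl⟩))

lemma dyn_rule_mem {d : DynamicLaw F A} (hd : d ∈ P.dom.dynamics) {t : ℕ} (ht : t < n) :
    (⟨some (PAtom.holds d.concl (t + 1)),
      insert (PAtom.occ d.act t) (holdsSet d.prem t), ∅⟩ : NRule (PAtom F A)) ∈
      (PiProgram P n).normals :=
  mem_normals_iff.mpr (Or.inr (Or.inr (Or.inl ⟨d, hd, t, ht, rfl⟩)))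

lemma stat_rule_mem {sl : StaticLaw F} (hsl : sl ∈ P.dom.statics) {t : ℕ} (ht : t ≤ n) :
    (⟨some (PAtom.holds sl.concl t), holdsSet sl.prem t, ∅⟩ : NRule (PAtom F A)) ∈
      (PiProgram P n).normals :=
  mem_normals_iff.mpr (Or.inr (Or.inr (Or.inr (Or.inl ⟨sl, hsl, t, ht, rfl⟩))))

lemma occcon_rule_mem (a : A) {t : ℕ} (ht : t < n) :
    (⟨none, {PAtom.occ a t}, {PAtom.possible a t}⟩ : NRule (PAtom F A)) ∈
      (PiProgram P n).normals :=
  mem_normals_iff.mpr (Or.inr (Or.inr (Or.inr (Or.inr (Or.inl ⟨a, t, ht, rfl⟩)))))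

lemma inertia_rule_mem (l : Lit F) {t : ℕ} (ht : t < n) :
    (⟨some (PAtom.holds l (t + 1)), {PAtom.holds l t},
      {PAtom.holds l.compl (t + 1)}⟩ : NRule (PAtom F A)) ∈ (PiProgram P n).normals :=
  mem_normals_iff.mpr (Or.inr (Or.inr (Or.inr (Or.inr (Or.inr (Or.inl ⟨l, t, ht, rfl⟩))))))

lemma conscon_rule_mem (f : F) {t : ℕ} (ht : t ≤ n) :
    (⟨none, {PAtom.holds (Lit.pos f) t, PAtom.holds (Lit.neg f) t}, ∅⟩ :
      NRule (PAtom F A)) ∈ (PiProgram P n).normals :=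
  mem_normals_iff.mpr (Or.inr (Or.inr (Or.inr (Or.inr (Or.inr (Or.inr
    (Or.inl ⟨f, t, ht, rfl⟩)))))))

lemma goal_rule_mem :
    (⟨some PAtom.goal, holdsSet P.goal n, ∅⟩ : NRule (PAtom F A)) ∈
      (PiProgram P n).normals :=
  mem_normals_iff.mpr (Or.inr (Or.inr (Or.inr (Or.inr (Or.inr (Or.inr
    (Or.inr (Or.inl rfl))))))))

lemma goalcon_rule_mem :
    (⟨none, ∅, {PAtom.goal}⟩ : NRule (PAtom F A)) ∈ (PiProgram P n).normals :=
  mem_normals_iff.mpr (Or.inr (Or.inr (Or.inr (Or.inr (Or.inr (Or.inr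
    (Or.inr (Or.inr rfl))))))))

lemma choice_rule_mem {t : ℕ} (ht : t < n) :
    (⟨{ x | ∃ a : A, x = PAtom.occ a t }, ∅, ∅⟩ : CRule (PAtom F A)) ∈
      (PiProgram P n).choiceRules :=
  ⟨t, ht, rfl⟩

end Aux2

/-- The intended answer set corresponding to a trajectory. -/
def fwdModel {F A : Type} (P : PlanningProblem F A) (n : ℕ) (ss : ℕ → Set (Lit F))
    (acts : ℕ → A) : Set (PAtom F A) :=
  { x | (∃ i ≤ n, ∃ l ∈ ss i, x = PAtom.holds l i) ∨
        (∃ i < n, x = PAtom.occ (acts i) i) ∨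
        (∃ t ≤ n, ∃ e ∈ P.dom.execs, e.prem ⊆ ss t ∧ x = PAtom.possible e.act t) ∨
        x = PAtom.goal }

section FwdMem
variable {F A : Type} {P : PlanningProblem F A} {n : ℕ} {ss : ℕ → Set (Lit F)} {acts : ℕ → A}

@[simp] lemma holds_mem_fwd {l : Lit F} {i : ℕ} :
    PAtom.holds l i ∈ fwdModel P n ss acts ↔ i ≤ n ∧ l ∈ ss i := by
  simp only [fwdModel, Set.mem_setOf_eq]
  constructor
  · rintro (⟨j, hj, m, hm, h⟩ | ⟨j, hj, h⟩ | ⟨t, ht, e, he, hp, h⟩ | h) <;>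
      first
      | (cases h; exact ⟨hj, hm⟩)
      | cases h
  · rintro ⟨hi, hl⟩; exact Or.inl ⟨i, hi, l, hl, rfl⟩

@[simp] lemma occ_mem_fwd {a : A} {i : ℕ} :
    PAtom.occ a i ∈ fwdModel P n ss acts ↔ i < n ∧ a = acts i := by
  simp only [fwdModel, Set.mem_setOf_eq]
  constructor
  · rintro (⟨j, hj, m, hm, h⟩ | ⟨j, hj, h⟩ | ⟨t, ht, e, he, hp, h⟩ | h) <;>
      first
      | (cases h; exact ⟨hj, rfl⟩)
      | cases h
  · rintro ⟨hi, rfl⟩; exact Or.inr (Or.inl ⟨i, hi, rfl⟩)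

@[simp] lemma poss_mem_fwd {a : A} {t : ℕ} :
    PAtom.possible a t ∈ fwdModel P n ss acts ↔
      t ≤ n ∧ ∃ e ∈ P.dom.execs, e.act = a ∧ e.prem ⊆ ss t := by
  simp only [fwdModel, Set.mem_setOf_eq]
  constructor
  · rintro (⟨j, hj, m, hm, h⟩ | ⟨j, hj, h⟩ | ⟨t', ht', e, he, hp, h⟩ | h) <;>
      first
      | (cases h; exact ⟨ht', e, he, rfl, hp⟩)
      | cases h
  · rintro ⟨ht, e, he, rfl, hp⟩; exact Or.inr (Or.inr (Or.inl ⟨t, ht, e, he, hp, rfl⟩))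

@[simp] lemma goal_mem_fwd : PAtom.goal ∈ fwdModel P n ss acts := by
  exact Or.inr (Or.inr (Or.inr rfl))

end FwdMem
theorem forward_direction {F A : Type} (P : PlanningProblem F A) (n : ℕ)
    (ss : ℕ → Set (Lit F)) (acts : ℕ → A)
    (htraj : IsTrajectory P.dom n ss acts) (h0 : ss 0 = P.init) (hgoal : P.goal ⊆ ss n) :
    ∃ M : Set (PAtom F A), AnswerSet (PiProgram P n) M ∧
        (∀ i < n, PAtom.occ (acts i) i ∈ M) ∧
        (∀ i ≤ n, ss i = { l | PAtom.holds l i ∈ M }) := by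
  refine ⟨fwdModel P n ss acts, ?_, ?_, ?_⟩
  case refine_2 => intro i hi; exact occ_mem_fwd.mpr ⟨hi, rfl⟩
  case refine_3 =>
    intro i hi; ext l
    simp only [Set.mem_setOf_eq, holds_mem_fwd]
    exact ⟨fun hl => ⟨hi, hl⟩, fun h => h.2⟩
  have hstate : ∀ i, i ≤ n → IsState P.dom (ss i) := by
    intro i hi
    cases i with
    | zero => exact htraj.1
    | succ j => exact (htraj.2 j (by omega)).2.1
  have hexec : ∀ t, t < n → Executable P.dom (acts t) (ss t) := fun t ht => (htraj.2 t ht).1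
  have hIsCl : ∀ t, t < n →
      IsCl P.dom.statics (directEffects P.dom (acts t) (ss t) ∪ (ss t ∩ ss (t + 1)))
        (ss (t + 1)) := fun t ht => (htraj.2 t ht).2.2
  refine ⟨?_, ?_, ?_, ?_⟩
  -- SatConstraints
  · intro r hr hhead
    rcases mem_normals_iff.mp hr with ⟨l, hl, rfl⟩ | ⟨e, he, t, ht, rfl⟩ | ⟨d, hd, t, ht, rfl⟩ |
      ⟨sl, hsl, t, ht, rfl⟩ | ⟨a, t, ht, rfl⟩ | ⟨l, t, ht, rfl⟩ | ⟨f, t, ht, rfl⟩ | rfl | rfl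
    · exact absurd hhead (Option.some_ne_none _)
    · exact absurd hhead (Option.some_ne_none _)
    · exact absurd hhead (Option.some_ne_none _)
    · exact absurd hhead (Option.some_ne_none _)
    · rintro ⟨hp, hn⟩
      have hocc := Set.singleton_subset_iff.mp hp
      obtain ⟨-, rfl⟩ := occ_mem_fwd.mp hocc
      obtain ⟨e, he, hact, hprem⟩ := hexec t ht
      have : PAtom.possible (acts t) t ∈ fwdModel P n ss acts :=
        poss_mem_fwd.mpr ⟨le_of_lt ht, e, he, hact, hprem⟩
      exact (Set.singleton_inter_eq_empty.mp hn) this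
    · exact absurd hhead (Option.some_ne_none _)
    · rintro ⟨hp, -⟩
      have h1 : PAtom.holds (Lit.pos f) t ∈ fwdModel P n ss acts := hp (Set.mem_insert _ _)
      have h2 : PAtom.holds (Lit.neg f) t ∈ fwdModel P n ss acts :=
        hp (Set.mem_insert_of_mem _ rfl)
      exact (hstate t ht).2.1 f ⟨(holds_mem_fwd.mp h1).2, (holds_mem_fwd.mp h2).2⟩
    · exact absurd hhead (Option.some_ne_none _)
    · rintro ⟨-, hn⟩
      exact (Set.singleton_inter_eq_empty.mp hn) goal_mem_fwd
  -- SatChoices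
  · intro c hc
    obtain ⟨t, ht, rfl⟩ := mem_choice_iff.mp hc
    intro _ _
    refine ⟨PAtom.occ (acts t) t, ⟨⟨acts t, rfl⟩, occ_mem_fwd.mpr ⟨ht, rfl⟩⟩, ?_⟩
    rintro x ⟨⟨a, rfl⟩, hx⟩
    obtain ⟨-, rfl⟩ := occ_mem_fwd.mp hx
    rfl
  -- ReductClosed M M
  · constructor
    · rintro r hr hneg hpos h hh
      rcases mem_normals_iff.mp hr with ⟨l, hl, rfl⟩ | ⟨e, he, t, ht, rfl⟩ | ⟨d, hd, t, ht, rfl⟩ |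
        ⟨sl, hsl, t, ht, rfl⟩ | ⟨a, t, ht, rfl⟩ | ⟨l, t, ht, rfl⟩ | ⟨f, t, ht, rfl⟩ | rfl | rfl
      · obtain rfl := Option.some.inj hh
        exact holds_mem_fwd.mpr ⟨Nat.zero_le n, h0 ▸ hl⟩
      · obtain rfl := Option.some.inj hh
        have hprem : e.prem ⊆ ss t := fun m hm =>
          (holds_mem_fwd.mp (holdsSet_subset_iff.mp hpos m hm)).2
        exact poss_mem_fwd.mpr ⟨ht, e, he, rfl, hprem⟩
      · obtain rfl := Option.some.inj hh
        have hocc : PAtom.occ d.act t ∈ fwdModel P n ss acts := hpos (Set.mem_insert _ _)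
        obtain ⟨-, hact⟩ := occ_mem_fwd.mp hocc
        have hprem : d.prem ⊆ ss t := by
          intro m hm
          have := hpos (Set.mem_insert_of_mem _ ⟨m, hm, rfl⟩)
          exact (holds_mem_fwd.mp this).2
        have : d.concl ∈ ss (t + 1) :=
          (hIsCl t ht).1 (Or.inl ⟨d, hd, hact, rfl, hprem⟩)
        exact holds_mem_fwd.mpr ⟨by omega, this⟩
      · obtain rfl := Option.some.inj hh
        have hprem : sl.prem ⊆ ss t := fun m hm =>
          (holds_mem_fwd.mp (holdsSet_subset_iff.mp hpos m hm)).2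
        exact holds_mem_fwd.mpr ⟨ht, (hstate t ht).2.2 sl hsl hprem⟩
      · exact absurd hh (Option.some_ne_none _).symm
      · obtain rfl := Option.some.inj hh
        have hlt : l ∈ ss t :=
          (holds_mem_fwd.mp (hpos (Set.mem_singleton _))).2
        have hcompl : l.compl ∉ ss (t + 1) := by
          intro hc
          exact (Set.singleton_inter_eq_empty.mp hneg)
            (holds_mem_fwd.mpr ⟨by omega, hc⟩)
        have : l ∈ ss (t + 1) :=
          compl_mem_of_not_mem (hstate (t + 1) (by omega)).1 hcompl
        exact holds_mem_fwd.mpr ⟨by omega, this⟩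
      · exact absurd hh (Option.some_ne_none _).symm
      · obtain rfl := Option.some.inj hh
        exact goal_mem_fwd
      · exact absurd hh (Option.some_ne_none _).symm
    · rintro c hc - - a - haM
      exact haM
  -- minimality
  · intro X hX
    have hoccX : ∀ t, t < n → PAtom.occ (acts t) t ∈ X := fun t ht =>
      hX.2 _ (choice_rule_mem ht) (Set.empty_inter _) (Set.empty_subset X) _
        ⟨acts t, rfl⟩ (occ_mem_fwd.mpr ⟨ht, rfl⟩)
    have hholds : ∀ t, t ≤ n → ∀ l ∈ ss t, PAtom.holds l t ∈ X := by
      intro t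
      induction t with
      | zero =>
        intro _ l hl
        exact hX.1 _ (fact_rule_mem (h0 ▸ hl)) (Set.empty_inter _) (Set.empty_subset X) _ rfl
      | succ j ih =>
        intro hj l hl
        have hjn : j < n := by omega
        have hIH : ∀ m ∈ ss j, PAtom.holds m j ∈ X := ih (by omega)
        have hcl := hIsCl j hjn
        have hsub : ss (j + 1) ⊆ { m | PAtom.holds m (j + 1) ∈ X } ∩ ss (j + 1) := by
          apply hcl.2.2.2
          · rintro m (⟨d, hd, hact, rfl, hprem⟩ | ⟨hm1, hm2⟩)
            · refine ⟨?_, hcl.1 (Or.inl ⟨d, hd, hact, rfl, hprem⟩)⟩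
              refine hX.1 _ (dyn_rule_mem hd hjn) (Set.empty_inter _) ?_ _ rfl
              rintro x (rfl | ⟨m', hm', rfl⟩)
              · exact hact ▸ hoccX j hjn
              · exact hIH m' (hprem hm')
            · refine ⟨?_, hm2⟩
              refine hX.1 _ (inertia_rule_mem m hjn) ?_ ?_ _ rfl
              · rw [Set.singleton_inter_eq_empty]
                intro habs
                exact compl_not_mem (hstate (j + 1) hj).2.1 hm2 (holds_mem_fwd.mp habs).2
              · exact Set.singleton_subset_iff.mpr (hIH m hm1)
          · intro f hf
            exact (hstate (j + 1) hj).2.1 f ⟨hf.1.2, hf.2.2⟩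
          · intro r hr hprem
            refine ⟨?_, (hstate (j + 1) hj).2.2 r hr (fun m hm => (hprem hm).2)⟩
            refine hX.1 _ (stat_rule_mem hr hj) (Set.empty_inter _) ?_ _ rfl
            rintro x ⟨m, hm, rfl⟩
            exact (hprem hm).1
        exact (hsub hl).1
    intro x hx
    rcases hx with ⟨i, hi, l, hl, rfl⟩ | ⟨i, hi, rfl⟩ | ⟨t, ht, e, he, hp, rfl⟩ | rfl
    · exact hholds i hi l hl
    · exact hoccX i hi
    · refine hX.1 _ (poss_rule_mem he ht) (Set.empty_inter _) ?_ _ rfl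
      rintro y ⟨m, hm, rfl⟩
      exact hholds t ht m (hp hm)
    · refine hX.1 _ goal_rule_mem (Set.empty_inter _) ?_ _ rfl
      rintro y ⟨m, hm, rfl⟩
      exact hholds n le_rfl m (hgoal hm)
/-- Helper: to show every element of an answer set `M` satisfies `cond`, it
suffices that `{x ∈ M | cond x}` is closed under the reduct. -/
lemma reduct_closed_sep {F A : Type} {P : PlanningProblem F A} {n : ℕ}
    {M : Set (PAtom F A)} (hRC : ReductClosed (PiProgram P n) M M)
    (cond : PAtom F A → Prop)
    (hoccc : ∀ (a : A) (t : ℕ), cond (PAtom.occ a t))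
    (hnorm : ∀ r ∈ (PiProgram P n).normals, r.neg ∩ M = ∅ →
      r.pos ⊆ {x | x ∈ M ∧ cond x} → ∀ h, r.head = some h → cond h) :
    ReductClosed (PiProgram P n) M {x | x ∈ M ∧ cond x} := by
  constructor
  · intro r hr hneg hpos h hh
    exact ⟨hRC.1 r hr hneg (fun x hx => (hpos hx).1) h hh, hnorm r hr hneg hpos h hh⟩
  · rintro c hc hneg hpos a ha haM
    obtain ⟨t, ht, rfl⟩ := mem_choice_iff.mp hc
    obtain ⟨a', rfl⟩ := ha
    exact ⟨haM, hoccc a' t⟩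

theorem backward_direction {F A : Type} (P : PlanningProblem F A) (n : ℕ)
    (hcons : ConsistentTheory P)
    (ss : ℕ → Set (Lit F)) (acts : ℕ → A) (M : Set (PAtom F A))
    (hAS : AnswerSet (PiProgram P n) M)
    (hocc : ∀ i < n, PAtom.occ (acts i) i ∈ M)
    (hss : ∀ i ≤ n, ss i = { l | PAtom.holds l i ∈ M }) :
    IsTrajectory P.dom n ss acts ∧ ss 0 = P.init ∧ P.goal ⊆ ss n := by
  obtain ⟨hSC, hCh, hRC, hMin⟩ := hAS
  -- B1: the only occurrence atoms are those of `acts`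
  have hoccu : ∀ t, t < n → ∀ a : A, PAtom.occ a t ∈ M → a = acts t := by
    intro t ht a ha
    obtain ⟨x, -, hxu⟩ := hCh _ (choice_rule_mem ht) (Set.empty_subset M) (Set.empty_inter M)
    have h1 := hxu _ ⟨⟨a, rfl⟩, ha⟩
    have h2 := hxu _ ⟨⟨acts t, rfl⟩, hocc t ht⟩
    have h3 : PAtom.occ a t = PAtom.occ (acts t) t := h1.trans h2.symm
    injection h3 with h4 h5
  -- B2: the initial slice is exactly the initial state
  have h0eq : ss 0 = P.init := by
    have hsub : ReductClosed (PiProgram P n) M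
        {x | x ∈ M ∧ ∀ l : Lit F, x = PAtom.holds l 0 → l ∈ P.init} := by
      refine reduct_closed_sep hRC _ (fun a t m heq => (by cases heq)) ?_
      intro r hr hneg hpos h hh
      rcases mem_normals_iff.mp hr with ⟨l, hl, rfl⟩ | ⟨e, he, t, ht, rfl⟩ |
        ⟨d, hd, t, ht, rfl⟩ | ⟨sl, hsl, t, ht, rfl⟩ | ⟨a, t, ht, rfl⟩ | ⟨l, t, ht, rfl⟩ |
        ⟨f, t, ht, rfl⟩ | rfl | rfl
      · obtain rfl := Option.some.inj hh
        intro m heq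
        injection heq with h1 h2
        exact h1 ▸ hl
      · obtain rfl := Option.some.inj hh
        intro m heq
        exact (by cases heq)
      · obtain rfl := Option.some.inj hh
        intro m heq
        injection heq with h1 h2
        omega
      · obtain rfl := Option.some.inj hh
        intro m heq
        injection heq with h1 h2
        subst h2
        refine h1 ▸ hcons.2.2.2 sl hsl ?_
        intro m' hm'
        exact (hpos ⟨m', hm', rfl⟩).2 m' rfl
      · exact absurd hh (Option.some_ne_none _).symm
      · obtain rfl := Option.some.inj hh
        intro m heq
        injection heq with h1 h2
        omega
      · exact absurd hh (Option.some_ne_none _).symm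
      · obtain rfl := Option.some.inj hh
        intro m heq
        exact (by cases heq)
      · exact absurd hh (Option.some_ne_none _).symm
    have hMsub := hMin _ hsub
    rw [hss 0 (Nat.zero_le n)]
    ext l
    constructor
    · intro hl
      exact (hMsub hl).2 l rfl
    · intro hl
      exact hRC.1 _ (fact_rule_mem hl) (Set.empty_inter _) (Set.empty_subset _) _ rfl
  -- B3: supportedness of `possible` atoms
  have hposs_supp : ∀ (a : A) (t : ℕ), PAtom.possible a t ∈ M →
      ∃ e ∈ P.dom.execs, e.act = a ∧ e.prem ⊆ {l : Lit F | PAtom.holds l t ∈ M} := by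
    intro a t hp
    have hsub : ReductClosed (PiProgram P n) M
        {x | x ∈ M ∧ ∀ (a' : A) (t' : ℕ), x = PAtom.possible a' t' →
          ∃ e ∈ P.dom.execs, e.act = a' ∧ e.prem ⊆ {l : Lit F | PAtom.holds l t' ∈ M}} := by
      refine reduct_closed_sep hRC _ (fun a t a' t' heq => (by cases heq)) ?_
      intro r hr hneg hpos h hh
      rcases mem_normals_iff.mp hr with ⟨l, hl, rfl⟩ | ⟨e, he, t', ht', rfl⟩ |
        ⟨d, hd, t', ht', rfl⟩ | ⟨sl, hsl, t', ht', rfl⟩ | ⟨a', t', ht', rfl⟩ |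
        ⟨l, t', ht', rfl⟩ | ⟨f, t', ht', rfl⟩ | rfl | rfl
      · obtain rfl := Option.some.inj hh
        intro a' t' heq
        exact (by cases heq)
      · obtain rfl := Option.some.inj hh
        intro a' t'' heq
        injection heq with h1 h2
        subst h1; subst h2
        exact ⟨e, he, rfl, fun m hm => (hpos ⟨m, hm, rfl⟩).1⟩
      · obtain rfl := Option.some.inj hh
        intro a' t'' heq
        exact (by cases heq)
      · obtain rfl := Option.some.inj hh
        intro a' t'' heq
        exact (by cases heq)
      · exact absurd hh (Option.some_ne_none _).symm
      · obtain rfl := Option.some.inj hh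
        intro a' t'' heq
        exact (by cases heq)
      · exact absurd hh (Option.some_ne_none _).symm
      · obtain rfl := Option.some.inj hh
        intro a' t'' heq
        exact (by cases heq)
      · exact absurd hh (Option.some_ne_none _).symm
    exact (hMin _ hsub hp).2 a t rfl
  -- B4: the goal is achieved
  have hgoalM : PAtom.goal ∈ M := by
    by_contra hg
    exact hSC _ goalcon_rule_mem rfl
      ⟨Set.empty_subset M, Set.singleton_inter_eq_empty.mpr hg⟩
  have hgoal_supp : ∀ l ∈ P.goal, PAtom.holds l n ∈ M := by
    have hsub : ReductClosed (PiProgram P n) M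
        {x | x ∈ M ∧ (x = PAtom.goal → ∀ l ∈ P.goal, PAtom.holds l n ∈ M)} := by
      refine reduct_closed_sep hRC _ (fun a t heq => (by cases heq)) ?_
      intro r hr hneg hpos h hh
      rcases mem_normals_iff.mp hr with ⟨l, hl, rfl⟩ | ⟨e, he, t', ht', rfl⟩ |
        ⟨d, hd, t', ht', rfl⟩ | ⟨sl, hsl, t', ht', rfl⟩ | ⟨a', t', ht', rfl⟩ |
        ⟨l, t', ht', rfl⟩ | ⟨f, t', ht', rfl⟩ | rfl | rfl
      · obtain rfl := Option.some.inj hh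
        intro heq; exact (by cases heq)
      · obtain rfl := Option.some.inj hh
        intro heq; exact (by cases heq)
      · obtain rfl := Option.some.inj hh
        intro heq; exact (by cases heq)
      · obtain rfl := Option.some.inj hh
        intro heq; exact (by cases heq)
      · exact absurd hh (Option.some_ne_none _).symm
      · obtain rfl := Option.some.inj hh
        intro heq; exact (by cases heq)
      · exact absurd hh (Option.some_ne_none _).symm
      · obtain rfl := Option.some.inj hh
        intro heq l hl
        exact (hpos ⟨l, hl, rfl⟩).1
      · exact absurd hh (Option.some_ne_none _).symm
    exact (hMin _ hsub hgoalM).2 rfl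
  -- B5: the transition step
  have hstep : ∀ t, t < n → IsState P.dom (ss t) →
      ss (t + 1) ∈ Phi P.dom (acts t) (ss t) := by
    intro t ht hstate_t
    have ht1 : t + 1 ≤ n := by omega
    have hs : ss t = {l : Lit F | PAtom.holds l t ∈ M} := hss t (by omega)
    have hs' : ss (t + 1) = {l : Lit F | PAtom.holds l (t + 1) ∈ M} := hss (t + 1) ht1
    -- possible atom is in M
    have hpossM : PAtom.possible (acts t) t ∈ M := by
      by_contra hp
      exact hSC _ (occcon_rule_mem (acts t) ht) rfl
        ⟨Set.singleton_subset_iff.mpr (hocc t ht),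
         Set.singleton_inter_eq_empty.mpr hp⟩
    have hexec : Executable P.dom (acts t) (ss t) := by
      obtain ⟨e, he, hact, hprem⟩ := hposs_supp (acts t) t hpossM
      exact ⟨e, he, hact, by rw [hs]; exact hprem⟩
    -- consistency of the next slice
    have hcons' : ConsistentLits (ss (t + 1)) := by
      intro f ⟨h1, h2⟩
      refine hSC _ (conscon_rule_mem f ht1) rfl ⟨?_, Set.empty_inter _⟩
      rintro x (rfl | rfl)
      · rw [hs'] at h1; exact h1
      · rw [hs'] at h2; exact h2
    -- closure of the next slice under static laws
    have hclosed' : ClosedUnder P.dom.statics (ss (t + 1)) := by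
      intro r hr hprem
      rw [hs']
      refine hRC.1 _ (stat_rule_mem hr ht1) (Set.empty_inter _) ?_ _ rfl
      rintro x ⟨m, hm, rfl⟩
      rw [hs'] at hprem
      exact hprem hm
    -- inertia transfer
    have hinert : ∀ l : Lit F, l ∈ ss t → l.compl ∉ ss (t + 1) → l ∈ ss (t + 1) := by
      intro l hlt hlc
      rw [hs']
      refine hRC.1 _ (inertia_rule_mem l ht) ?_ ?_ _ rfl
      · rw [Set.singleton_inter_eq_empty]
        intro hc
        exact hlc (by rw [hs']; exact hc)
      · refine Set.singleton_subset_iff.mpr ?_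
        rw [hs] at hlt; exact hlt
    -- completeness of the next slice
    have hcomp' : CompleteLits (ss (t + 1)) := by
      intro f
      rcases hstate_t.1 f with h | h
      · by_cases hn : Lit.neg f ∈ ss (t + 1)
        · exact Or.inr hn
        · exact Or.inl (hinert (Lit.pos f) h hn)
      · by_cases hp : Lit.pos f ∈ ss (t + 1)
        · exact Or.inl hp
        · exact Or.inr (hinert (Lit.neg f) h hp)
    have hstate' : IsState P.dom (ss (t + 1)) := ⟨hcomp', hcons', hclosed'⟩
    -- direct effects are in the next slice
    have heff : directEffects P.dom (acts t) (ss t) ⊆ ss (t + 1) := by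
      rintro m ⟨d, hd, hact, rfl, hprem⟩
      rw [hs']
      refine hRC.1 _ (dyn_rule_mem hd ht) (Set.empty_inter _) ?_ _ rfl
      rintro x (rfl | ⟨m', hm', rfl⟩)
      · exact hact ▸ hocc t ht
      · rw [hs] at hprem; exact hprem hm'
    -- minimality of the next slice (IsCl)
    have hmin' : ∀ w, directEffects P.dom (acts t) (ss t) ∪ (ss t ∩ ss (t + 1)) ⊆ w →
        ConsistentLits w → ClosedUnder P.dom.statics w → ss (t + 1) ⊆ w := by
      intro w hw hwcons hwclosed
      have hsub : ReductClosed (PiProgram P n) M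
          {x | x ∈ M ∧ ∀ l : Lit F, x = PAtom.holds l (t + 1) → l ∈ w} := by
        refine reduct_closed_sep hRC _ (fun a t' m heq => (by cases heq)) ?_
        intro r hr hneg hpos h hh
        rcases mem_normals_iff.mp hr with ⟨l, hl, rfl⟩ | ⟨e, he, t', ht', rfl⟩ |
          ⟨d, hd, t', ht', rfl⟩ | ⟨sl, hsl, t', ht', rfl⟩ | ⟨a', t', ht', rfl⟩ |
          ⟨l, t', ht', rfl⟩ | ⟨f, t', ht', rfl⟩ | rfl | rfl
        · obtain rfl := Option.some.inj hh
          intro m heq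
          injection heq with h1 h2
          omega
        · obtain rfl := Option.some.inj hh
          intro m heq
          exact (by cases heq)
        · -- dynamic law at t' = t
          obtain rfl := Option.some.inj hh
          intro m heq
          injection heq with h1 h2
          obtain rfl : t = t' := by omega
          subst h1
          have hoX : PAtom.occ d.act t ∈ M := (hpos (Set.mem_insert _ _)).1
          have hact : d.act = acts t := hoccu t ht d.act hoX
          have hprem : d.prem ⊆ ss t := by
            intro m' hm'
            rw [hs]
            exact (hpos (Set.mem_insert_of_mem _ ⟨m', hm', rfl⟩)).1
          exact hw (Or.inl ⟨d, hd, hact, rfl, hprem⟩)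
        · -- static law at t' = t + 1
          obtain rfl := Option.some.inj hh
          intro m heq
          injection heq with h1 h2
          subst h2
          subst h1
          refine hwclosed sl hsl ?_
          intro m' hm'
          exact (hpos ⟨m', hm', rfl⟩).2 m' rfl
        · exact absurd hh (Option.some_ne_none _).symm
        · -- inertia at t' = t
          obtain rfl := Option.some.inj hh
          intro m heq
          injection heq with h1 h2
          obtain rfl : t = t' := by omega
          subst h1
          have hlt : l ∈ ss t := by
            rw [hs]
            exact (hpos (Set.mem_singleton _)).1
          have hlc : l.compl ∉ ss (t + 1) := by
            rw [hs']
            exact fun hc => (Set.singleton_inter_eq_empty.mp hneg) hc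
          exact hw (Or.inr ⟨hlt, compl_mem_of_not_mem hcomp' hlc⟩)
        · exact absurd hh (Option.some_ne_none _).symm
        · obtain rfl := Option.some.inj hh
          intro m heq
          exact (by cases heq)
        · exact absurd hh (Option.some_ne_none _).symm
      intro l hl
      rw [hs'] at hl
      exact (hMin _ hsub hl).2 l rfl
    exact ⟨hexec, hstate', Set.union_subset heff (Set.inter_subset_right),
      hcons', hclosed', hmin'⟩
  -- assemble
  have hchain : ∀ t, t ≤ n → IsState P.dom (ss t) := by
    intro t
    induction t with
    | zero => intro _; rw [h0eq]; exact hcons.2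
    | succ j ih =>
      intro hj
      exact (hstep j (by omega) (ih (by omega))).2.1
  refine ⟨⟨hchain 0 (Nat.zero_le n), fun i hi => hstep i hi (hchain i (le_of_lt hi))⟩,
    h0eq, ?_⟩
  intro l hl
  rw [hss n le_rfl]
  exact hgoal_supp l hl

/-- **Theorem 1** (correctness of `Π(P,n)`): trajectories achieving the goal from the
initial state correspond exactly to answer sets of `Π(P,n)`. -/
theorem answer_set_planning_correctness {F A : Type}
    (P : PlanningProblem F A) (n : ℕ) (hcons : ConsistentTheory P)
    (ss : ℕ → Set (Lit F)) (acts : ℕ → A) :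
    (IsTrajectory P.dom n ss acts ∧ ss 0 = P.init ∧ P.goal ⊆ ss n) ↔
    (∃ M : Set (PAtom F A), AnswerSet (PiProgram P n) M ∧
        (∀ i < n, PAtom.occ (acts i) i ∈ M) ∧
        (∀ i ≤ n, ss i = { l | PAtom.holds l i ∈ M })) := by
  constructor
  · rintro ⟨htraj, h0, hgoal⟩
    exact forward_direction P n ss acts htraj h0 hgoal
  · rintro ⟨M, hAS, hoccM, hssM⟩
    exact backward_direction P n hcons ss acts M hAS hoccM hssM
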